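/- For every multiindex ν ∈ ℕ₀^d, the double sum ∑_{0 < m < ν} ∑_{0 ≤ ℓ ≤ m} C(ν,m) · C(m,ℓ) · |(1/2)_{|ν−m|}| · |(1/2)_{|m−ℓ|}| · |(1/2)_{|ℓ|}| ≤ 8 · |(1/2)_{|ν|}|. -/

import Mathlib

/-- The absolute value of the falling factorial `(1/2)_n`. -/
noncomputable def ff (n : ℕ) : ℝ := |(descPochhammer ℝ n).eval (1/2 : ℝ)|

open Finset Polynomial

lemma ff_nonneg (n : ℕ) : 0 ≤ ff n := abs_nonneg _

lemma ff_zero : ff 0 = 1 := by simp [ff]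

lemma ff_one : ff 1 = 1/2 := by simp [ff, descPochhammer]

lemma dp_smeval (n : ℕ) (x : ℝ) :
    (descPochhammer ℤ n).smeval x = (descPochhammer ℝ n).eval x := by
  induction n with
  | zero => simp [descPochhammer_zero, smeval_one]
  | succ n ih =>
      rw [descPochhammer_succ_right, descPochhammer_succ_right, smeval_mul, smeval_sub,
        smeval_X, smeval_natCast, ih]
      simp

lemma dp_vandermonde (n : ℕ) (x y : ℝ) :
    (descPochhammer ℝ n).eval (x + y) = ∑ ij ∈ Finset.HasAntidiagonal.antidiagonal n,
      (n.choose ij.1 : ℝ) * ((descPochhammer ℝ ij.1).eval x * (descPochhammer ℝ ij.2).eval y) := by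
  have := Ring.descPochhammer_smeval_add (R := ℝ) (r := x) (s := y) n (Commute.all x y)
  simpa [dp_smeval] using this

lemma dp_eval_one (n : ℕ) (hn : 2 ≤ n) : (descPochhammer ℝ n).eval 1 = 0 := by
  induction n with
  | zero => omega
  | succ n ih =>
      rcases Nat.lt_or_ge n 2 with h | h
      · interval_cases n
        · omega
        · simp [descPochhammer_succ_right, descPochhammer]
      · rw [descPochhammer_succ_right]
        simp [ih h]

lemma dp_sign (n : ℕ) :
    (descPochhammer ℝ n).eval (1/2) = (if n = 0 then 1 else (-1)^(n-1)) * ff n := by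
  induction n with
  | zero => simp [ff_zero]
  | succ n ih =>
      rcases Nat.eq_zero_or_pos n with rfl | hn
      · simp [ff_one, descPochhammer]
      · have hev : (descPochhammer ℝ (n+1)).eval (1/2 : ℝ)
            = (descPochhammer ℝ n).eval (1/2 : ℝ) * ((1:ℝ)/2 - n) := by
          rw [descPochhammer_succ_right]; simp
        have hffs : ff (n+1) = ff n * ((n:ℝ) - 1/2) := by
          have h1 : (1:ℝ) ≤ n := by exact_mod_cast hn
          rw [ff, hev, abs_mul, abs_sub_comm,
            abs_of_nonneg (show (0:ℝ) ≤ (n:ℝ) - 1/2 by linarith)]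
          rfl
        have hne : n ≠ 0 := hn.ne'
        rw [hev, ih, hffs]
        simp only [hne, if_false, Nat.add_sub_cancel, Nat.succ_ne_zero]
        have hps : (-1 : ℝ)^n = (-1)^(n-1) * (-1) := by
          conv_lhs => rw [show n = (n-1)+1 by omega]
          rw [pow_succ]
        rw [hps]; ring

lemma conv_p (n : ℕ) : (descPochhammer ℝ n).eval 1 =
    ∑ k ∈ range (n+1), (n.choose k : ℝ) *
      ((descPochhammer ℝ k).eval (1/2) * (descPochhammer ℝ (n-k)).eval (1/2)) := by
  have h := dp_vandermonde n (1/2) (1/2)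
  norm_num at h
  rw [h, Finset.Nat.sum_antidiagonal_eq_sum_range_succ_mk]

lemma mid_eq (n : ℕ) (hn : 2 ≤ n) :
    ∑ i ∈ range (n-1), (n.choose (i+1) : ℝ) * (ff (i+1) * ff (n-(i+1))) = 2 * ff n := by
  have h0 := conv_p n
  rw [dp_eval_one n hn, Finset.sum_range_succ' _ n] at h0
  -- now : 0 = (∑ i in range n, f (i+1)) + f 0
  rw [show n = (n-1)+1 by omega] at h0
  rw [Finset.sum_range_succ] at h0
  rw [show n-1+1 = n by omega] at h0
  have hmid : ∑ i ∈ range (n-1), (n.choose (i+1) : ℝ) *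
      ((descPochhammer ℝ (i+1)).eval (1/2) * (descPochhammer ℝ (n-(i+1))).eval (1/2))
      = (-1:ℝ)^n * ∑ i ∈ range (n-1), (n.choose (i+1) : ℝ) * (ff (i+1) * ff (n-(i+1))) := by
    rw [Finset.mul_sum]
    refine Finset.sum_congr rfl fun i hi => ?_
    have hi' : i < n - 1 := Finset.mem_range.mp hi
    rw [dp_sign (i+1), dp_sign (n-(i+1))]
    have h1 : i+1 ≠ 0 := by omega
    have h2 : n-(i+1) ≠ 0 := by omega
    simp only [h1, h2, if_false]
    have hsgn : (-1:ℝ)^(i+1-1) * (-1:ℝ)^(n-(i+1)-1) = (-1:ℝ)^n := by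
      rw [← pow_add, show i+1-1 + (n-(i+1)-1) = n - 2 by omega,
        show n = (n-2)+2 by omega, pow_add]
      norm_num
    calc (n.choose (i+1) : ℝ) * ((-1:ℝ)^(i+1-1) * ff (i+1) * ((-1:ℝ)^(n-(i+1)-1) * ff (n-(i+1))))
        = ((-1:ℝ)^(i+1-1) * (-1:ℝ)^(n-(i+1)-1)) * ((n.choose (i+1) : ℝ) * (ff (i+1) * ff (n-(i+1)))) := by ring
      _ = _ := by rw [hsgn]
  rw [hmid] at h0
  simp only [Nat.sub_self, Nat.sub_zero, Nat.choose_zero_right, Nat.choose_self,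
    Nat.cast_one, one_mul, descPochhammer_zero, eval_one, mul_one] at h0
  rw [dp_sign n] at h0
  simp only [show n ≠ 0 by omega, if_false] at h0
  set M := ∑ i ∈ range (n-1), (n.choose (i+1) : ℝ) * (ff (i+1) * ff (n-(i+1))) with hM
  set a := (-1:ℝ)^(n-1) with ha
  set b := (-1:ℝ)^n with hb
  have hab : a * b = -1 := by
    rw [ha, hb, ← pow_add, show n-1+n = 2*(n-1)+1 by omega, pow_succ, pow_mul]
    norm_num
  have haa : a * a = 1 := by
    rw [ha, ← pow_add, ← two_mul, pow_mul]
    norm_num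
  have h4 : (0:ℝ) = (a*b) * M + (a*a) * (2 * ff n) := by linear_combination a * h0
  rw [hab, haa] at h4
  linarith

lemma conv_T (n : ℕ) (hn : 2 ≤ n) :
    ∑ k ∈ range (n+1), (n.choose k : ℝ) * (ff k * ff (n-k)) = 4 * ff n := by
  rw [Finset.sum_range_succ']
  rw [show n = (n-1)+1 by omega, Finset.sum_range_succ, show n-1+1 = n by omega]
  rw [mid_eq n hn]
  simp only [Nat.sub_self, Nat.sub_zero, Nat.choose_zero_right, Nat.choose_self, Nat.cast_one,
    one_mul, ff_zero, mul_one]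
  ring

lemma conv_le (n : ℕ) (hn : 1 ≤ n) :
    ∑ k ∈ range (n+1), (n.choose k : ℝ) * (ff k * ff (n-k)) ≤ 4 * ff n := by
  rcases Nat.lt_or_ge n 2 with h | h
  · interval_cases n
    · norm_num [Finset.sum_range_succ, ff_zero, ff_one]
  · exact le_of_eq (conv_T n h)

lemma poly_key (d : ℕ) (m : Fin d → ℕ) :
    ∑ l ∈ Fintype.piFinset (fun j => range (m j + 1)),
      (∏ j, ((m j).choose (l j) : ℝ)) • (X : ℝ[X]) ^ (∑ j, l j)
    = (X + 1) ^ (∑ j, m j) := by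
  rw [← Finset.prod_pow_eq_pow_sum]
  have h1 : ∀ j : Fin d, ((X : ℝ[X]) + 1) ^ (m j)
      = ∑ i ∈ range (m j + 1), ((m j).choose i : ℝ) • (X : ℝ[X]) ^ i := by
    intro j
    rw [add_pow]
    refine Finset.sum_congr rfl fun i _ => ?_
    rw [one_pow, mul_one, Polynomial.smul_eq_C_mul, mul_comm]
    simp
  simp only [h1]
  rw [Finset.prod_univ_sum]
  refine Finset.sum_congr rfl fun l _ => ?_
  simp only [Polynomial.smul_eq_C_mul]
  rw [Finset.prod_mul_distrib, ← map_prod, Finset.prod_pow_eq_pow_sum]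

lemma cnt (d : ℕ) (m : Fin d → ℕ) (k : ℕ) :
    ∑ l ∈ Fintype.piFinset (fun j => range (m j + 1)),
      (if (∑ j, l j) = k then (∏ j, ((m j).choose (l j) : ℝ)) else 0)
    = (((∑ j, m j).choose k : ℝ)) := by
  have h := congrArg (fun p : ℝ[X] => p.coeff k) (poly_key d m)
  simp only [Polynomial.finset_sum_coeff, Polynomial.coeff_smul, Polynomial.coeff_X_pow,
    Polynomial.coeff_X_add_one_pow, smul_eq_mul] at h
  rw [← h]
  refine Finset.sum_congr rfl fun l _ => ?_
  by_cases hc : (∑ j, l j) = k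
  · simp [hc]
  · simp [hc, Ne.symm hc]

lemma piSum (d : ℕ) (m : Fin d → ℕ) (g : ℕ → ℝ) :
    ∑ l ∈ Fintype.piFinset (fun j => range (m j + 1)),
      (∏ j, ((m j).choose (l j) : ℝ)) * g (∑ j, l j)
    = ∑ k ∈ range ((∑ j, m j) + 1), ((∑ j, m j).choose k : ℝ) * g k := by
  have hr : ∑ k ∈ range ((∑ j, m j) + 1), ((∑ j, m j).choose k : ℝ) * g k
      = ∑ k ∈ range ((∑ j, m j) + 1), ∑ l ∈ Fintype.piFinset (fun j => range (m j + 1)),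
          (if (∑ j, l j) = k then (∏ j, ((m j).choose (l j) : ℝ)) else 0) * g k := by
    refine Finset.sum_congr rfl fun k _ => ?_
    rw [← cnt d m k, Finset.sum_mul]
  rw [hr, Finset.sum_comm]
  refine Finset.sum_congr rfl fun l hl => ?_
  have hle : (∑ j, l j) ≤ ∑ j, m j := by
    refine Finset.sum_le_sum fun j _ => ?_
    have := (Fintype.mem_piFinset.mp hl) j
    simpa [Nat.lt_succ_iff] using Finset.mem_range.mp this
  rw [Finset.sum_eq_single (∑ j, l j)]
  · simp
  · intro b _ hb
    simp [Ne.symm hb]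
  · intro hmem
    exact absurd (Finset.mem_range.mpr (Nat.lt_succ_of_le hle)) hmem

lemma sum_lt_of_ne {d : ℕ} {m ν : Fin d → ℕ} (hle : ∀ j, m j ≤ ν j) (hne : m ≠ ν) :
    ∑ j, m j < ∑ j, ν j := by
  obtain ⟨j, hj⟩ := Function.ne_iff.mp hne
  exact Finset.sum_lt_sum (fun i _ => hle i) ⟨j, Finset.mem_univ j, lt_of_le_of_ne (hle j) hj⟩

lemma one_le_sum_of_ne_zero {d : ℕ} {m : Fin d → ℕ} (hm : m ≠ 0) : 1 ≤ ∑ j, m j := by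
  by_contra h
  push_neg at h
  apply hm
  funext j
  have := Finset.sum_eq_zero_iff.mp (Nat.lt_one_iff.mp h) j (Finset.mem_univ j)
  simpa using this

theorem stmt13 (d : ℕ) (ν : Fin d → ℕ) :
    ∑ m ∈ (Fintype.piFinset fun j => Finset.range (ν j + 1)).filter
        (fun m => m ≠ 0 ∧ m ≠ ν),
      ∑ l ∈ Fintype.piFinset fun j => Finset.range (m j + 1),
        (∏ j, ((ν j).choose (m j) : ℝ)) * (∏ j, ((m j).choose (l j) : ℝ))
          * ff (∑ j, (ν j - m j)) * ff (∑ j, (m j - l j)) * ff (∑ j, l j)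
      ≤ 8 * ff (∑ j, ν j) := by
  set N := ∑ j, ν j with hN
  set S := (Fintype.piFinset fun j => Finset.range (ν j + 1)).filter
      (fun m => m ≠ 0 ∧ m ≠ ν) with hS
  have memS : ∀ m ∈ S, (∀ j, m j ≤ ν j) ∧ m ≠ 0 ∧ m ≠ ν := by
    intro m hm
    rw [hS, Finset.mem_filter] at hm
    refine ⟨fun j => ?_, hm.2⟩
    have := Fintype.mem_piFinset.mp hm.1 j
    simpa [Nat.lt_succ_iff] using Finset.mem_range.mp this
  rcases Nat.lt_or_ge N 2 with hN1 | hN2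
  · have hempty : S = ∅ := by
      refine Finset.eq_empty_of_forall_notMem fun m hm => ?_
      obtain ⟨hle, hne0, hnen⟩ := memS m hm
      have h1 := one_le_sum_of_ne_zero hne0
      have h2 := sum_lt_of_ne hle hnen
      omega
    rw [hempty, Finset.sum_empty]
    have := ff_nonneg N
    linarith
  -- main case
  have hinner : ∀ m ∈ S,
      ∑ l ∈ Fintype.piFinset fun j => Finset.range (m j + 1),
        (∏ j, ((ν j).choose (m j) : ℝ)) * (∏ j, ((m j).choose (l j) : ℝ))
          * ff (∑ j, (ν j - m j)) * ff (∑ j, (m j - l j)) * ff (∑ j, l j)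
      ≤ (∏ j, ((ν j).choose (m j) : ℝ)) * ff (∑ j, (ν j - m j)) * (4 * ff (∑ j, m j)) := by
    intro m hm
    obtain ⟨hle, hne0, hnen⟩ := memS m hm
    have hstep : ∀ l ∈ Fintype.piFinset fun j => Finset.range (m j + 1),
        (∏ j, ((ν j).choose (m j) : ℝ)) * (∏ j, ((m j).choose (l j) : ℝ))
          * ff (∑ j, (ν j - m j)) * ff (∑ j, (m j - l j)) * ff (∑ j, l j)
        = ((∏ j, ((ν j).choose (m j) : ℝ)) * ff (∑ j, (ν j - m j))) *
          ((∏ j, ((m j).choose (l j) : ℝ)) * (ff ((∑ j, m j) - (∑ j, l j)) * ff (∑ j, l j))) := by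
      intro l hl
      have hlle : ∀ j, l j ≤ m j := by
        intro j
        have := Fintype.mem_piFinset.mp hl j
        simpa [Nat.lt_succ_iff] using Finset.mem_range.mp this
      rw [Finset.sum_tsub_distrib Finset.univ (fun j _ => hlle j)]
      ring
    rw [Finset.sum_congr rfl hstep, ← Finset.mul_sum]
    have hnn : 0 ≤ (∏ j, ((ν j).choose (m j) : ℝ)) * ff (∑ j, (ν j - m j)) := by
      apply mul_nonneg _ (ff_nonneg _)
      exact Finset.prod_nonneg fun j _ => Nat.cast_nonneg _
    refine mul_le_mul_of_nonneg_left ?_ hnn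
    rw [piSum d m (fun k => ff ((∑ j, m j) - k) * ff k)]
    calc ∑ k ∈ range ((∑ j, m j) + 1), ((∑ j, m j).choose k : ℝ) * (ff ((∑ j, m j) - k) * ff k)
        = ∑ k ∈ range ((∑ j, m j) + 1), ((∑ j, m j).choose k : ℝ) * (ff k * ff ((∑ j, m j) - k)) := by
          refine Finset.sum_congr rfl fun k _ => by ring
      _ ≤ 4 * ff (∑ j, m j) := conv_le _ (one_le_sum_of_ne_zero hne0)
  refine le_trans (Finset.sum_le_sum hinner) ?_
  -- now : ∑ m in S, c_m * (4 * ff (∑ m)) ≤ 8 * ff N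
  have houter : ∀ m ∈ S,
      (∏ j, ((ν j).choose (m j) : ℝ)) * ff (∑ j, (ν j - m j)) * (4 * ff (∑ j, m j))
      = 4 * ((∏ j, ((ν j).choose (m j) : ℝ)) * (ff (N - (∑ j, m j)) * ff (∑ j, m j))) := by
    intro m hm
    obtain ⟨hle, _, _⟩ := memS m hm
    rw [Finset.sum_tsub_distrib Finset.univ (fun j _ => hle j), ← hN]
    ring
  rw [Finset.sum_congr rfl houter, ← Finset.mul_sum]
  -- it remains : ∑ m in S, G m = 2 * ff N  where G m = prod * (ff (N - ∑m) * ff ∑m)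
  have hG : ∑ m ∈ S, (∏ j, ((ν j).choose (m j) : ℝ)) * (ff (N - (∑ j, m j)) * ff (∑ j, m j))
      = 2 * ff N := by
    have hfull : ∑ m ∈ Fintype.piFinset fun j => Finset.range (ν j + 1),
        (∏ j, ((ν j).choose (m j) : ℝ)) * (ff (N - (∑ j, m j)) * ff (∑ j, m j))
        = 4 * ff N := by
      rw [piSum d ν (fun k => ff (N - k) * ff k), ← hN]
      calc ∑ k ∈ range (N + 1), (N.choose k : ℝ) * (ff (N - k) * ff k)
          = ∑ k ∈ range (N + 1), (N.choose k : ℝ) * (ff k * ff (N - k)) := by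
            refine Finset.sum_congr rfl fun k _ => by ring
        _ = 4 * ff N := conv_T N hN2
    have hsplit := Finset.sum_filter_add_sum_filter_not
      (Fintype.piFinset fun j => Finset.range (ν j + 1))
      (fun m => m ≠ 0 ∧ m ≠ ν)
      (fun m => (∏ j, ((ν j).choose (m j) : ℝ)) * (ff (N - (∑ j, m j)) * ff (∑ j, m j)))
    have hnu0 : (0 : Fin d → ℕ) ≠ ν := by
      intro h
      rw [hN, ← h] at hN2
      simp at hN2
    have hmem0 : (0 : Fin d → ℕ) ∈ Fintype.piFinset fun j => Finset.range (ν j + 1) := by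
      rw [Fintype.mem_piFinset]; intro j; simp
    have hmemν : ν ∈ Fintype.piFinset fun j => Finset.range (ν j + 1) := by
      rw [Fintype.mem_piFinset]; intro j; simp
    have hfilter : (Fintype.piFinset fun j => Finset.range (ν j + 1)).filter
        (fun m => ¬(m ≠ 0 ∧ m ≠ ν)) = {0, ν} := by
      ext x
      simp only [Finset.mem_filter, Finset.mem_insert, Finset.mem_singleton, not_and_or, not_not]
      constructor
      · rintro ⟨_, h | h⟩
        · exact Or.inl h
        · exact Or.inr h
      · rintro (rfl | rfl)
        · exact ⟨hmem0, Or.inl rfl⟩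
        · exact ⟨hmemν, Or.inr rfl⟩
    rw [hfilter] at hsplit
    rw [Finset.sum_pair hnu0] at hsplit
    have hv0 : (∏ j, ((ν j).choose ((0 : Fin d → ℕ) j) : ℝ)) *
        (ff (N - (∑ j, (0 : Fin d → ℕ) j)) * ff (∑ j, (0 : Fin d → ℕ) j)) = ff N := by
      simp [ff_zero]
    have hvν : (∏ j, ((ν j).choose (ν j) : ℝ)) * (ff (N - (∑ j, ν j)) * ff (∑ j, ν j)) = ff N := by
      simp [ff_zero, ← hN]
    rw [hfull, ← hS] at hsplit
    rw [hv0, hvν] at hsplit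
    linarith
  rw [hG]
  linarith [ff_nonneg N]
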